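/- In a tail-biting SC code with coupling length L, every cycle candidate in the base matrix whose alternating partitioning sum is zero gives rise to exactly L distinct cycles in the protograph (one per replica offset). -/

import Mathlib

open Finset

/-- The lifted column-replica trajectory of a closed path with per-step displacements `δ`,
started at replica offset `t₀`. -/
def traj (L : ℕ) (δ : ℕ → ℤ) (t₀ : ZMod L) (k : ℕ) : ZMod L :=
  t₀ + ∑ l ∈ Finset.range k, ((δ l : ℤ) : ZMod L)

/-- In a tail-biting SC code with coupling length `L`, a cycle candidate whose alternating
partitioning sum vanishes mod `L` gives rise to exactly `L` distinct cycles in the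
protograph: each of the `L` replica offsets yields a closed lifted walk, and these `L`
walks are pairwise distinct. -/
theorem zero_alternating_sum_gives_L_cycles (γ κ L g : ℕ) [NeZero L] (hg : 2 ≤ g)
    (P : Fin γ → Fin κ → ℤ)
    (i : ℕ → Fin γ) (j : ℕ → Fin κ) (hclose : j g = j 0)
    (δ : ℕ → ℤ) (hδ : ∀ k, δ k = P (i k) (j k) - P (i k) (j (k + 1)))
    (hsum : (∑ k ∈ Finset.range g, δ k) ≡ 0 [ZMOD (L : ℤ)]) :
    (∀ t₀ : ZMod L, traj L δ t₀ g = traj L δ t₀ 0) ∧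
    Set.ncard (Set.range (traj L δ)) = L := by
  have hzero : ((∑ k ∈ Finset.range g, δ k : ℤ) : ZMod L) = 0 := by
    have := (ZMod.intCast_eq_intCast_iff' _ _ _).mpr hsum
    simpa using this
  constructor
  · intro t₀
    simp [traj, ← Int.cast_sum, hzero]
  · have hinj : Function.Injective (traj L δ) := by
      intro a b hab
      have := congrFun hab 0
      simpa [traj] using this
    rw [← Set.image_univ, Set.ncard_image_of_injective _ hinj, Set.ncard_univ,
      Nat.card_eq_fintype_card, ZMod.card]
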